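/- For R₃ = diag(-2i, 0, 2i) and the su(3) matrices X₁, Y₁, X₂, Y₂, the curve γ(t) = e^{π(5X₁ + √7 Y₁ + 5X₂ + √7 Y₂ + 3R₃)t} e^{-3πR₃ t} satisfies γ(0) = γ(1) = I, and the vector H = π(5X₁ + √7 Y₁ + 5X₂ + √7 Y₂) has norm ‖H‖ = 8π with respect to ⟨X,Y⟩ = -½ tr(XY). -/

import Mathlib

open Matrix

noncomputable section

def T1 : Matrix (Fin 3) (Fin 3) ℂ :=
  !![-Complex.I, 0, 0; 0, Complex.I, 0; 0, 0, 0]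
def T2 : Matrix (Fin 3) (Fin 3) ℂ :=
  !![-Complex.I / Real.sqrt 3, 0, 0; 0, -Complex.I / Real.sqrt 3, 0;
     0, 0, 2 * Complex.I / Real.sqrt 3]
def X1 : Matrix (Fin 3) (Fin 3) ℂ := !![0, 1, 0; -1, 0, 0; 0, 0, 0]
def Y1 : Matrix (Fin 3) (Fin 3) ℂ := !![0, Complex.I, 0; Complex.I, 0, 0; 0, 0, 0]
def X2 : Matrix (Fin 3) (Fin 3) ℂ := !![0, 0, 0; 0, 0, 1; 0, -1, 0]
def Y2 : Matrix (Fin 3) (Fin 3) ℂ := !![0, 0, 0; 0, 0, -Complex.I; 0, -Complex.I, 0]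
def X3 : Matrix (Fin 3) (Fin 3) ℂ := !![0, 0, 1; 0, 0, 0; -1, 0, 0]
def Y3 : Matrix (Fin 3) (Fin 3) ℂ := !![0, 0, Complex.I; 0, 0, 0; Complex.I, 0, 0]
def R1 : Matrix (Fin 3) (Fin 3) ℂ := !![-2 * Complex.I, 0, 0; 0, 2 * Complex.I, 0; 0, 0, 0]
def R2 : Matrix (Fin 3) (Fin 3) ℂ := !![0, 0, 0; 0, 2 * Complex.I, 0; 0, 0, -2 * Complex.I]
def R3 : Matrix (Fin 3) (Fin 3) ℂ := !![-2 * Complex.I, 0, 0; 0, 0, 0; 0, 0, 2 * Complex.I]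

local notation "s" => (Real.sqrt 7 : ℂ)
local notation "π'" => (Real.pi : ℂ)

def Pm : Matrix (Fin 3) (Fin 3) ℂ :=
  !![5 + s * Complex.I, 5 + s * Complex.I, 4 * (5 + s * Complex.I);
     6 * Complex.I, 16 * Complex.I, -16 * Complex.I;
     5 + s * Complex.I, -4 * (5 + s * Complex.I), -(5 + s * Complex.I)]

def Qm : Matrix (Fin 3) (Fin 3) ℂ :=
  !![(5 - s * Complex.I) / 100, -6 * Complex.I / 100, (5 - s * Complex.I) / 100;
     (5 - s * Complex.I) / 800, -16 * Complex.I / 800, -4 * (5 - s * Complex.I) / 800;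
     4 * (5 - s * Complex.I) / 800, 16 * Complex.I / 800, -(5 - s * Complex.I) / 800]

def dvec : Fin 3 → ℂ := ![0, 10 * π' * Complex.I, -(10 * π' * Complex.I)]

lemma diagonal_fin3 (v : Fin 3 → ℂ) :
    Matrix.diagonal v = !![v 0, 0, 0; 0, v 1, 0; 0, 0, v 2] := by
  ext i j
  fin_cases i <;> fin_cases j <;> simp [Matrix.diagonal_apply, Matrix.vecHead, Matrix.vecTail]

lemma s_sq : s * s = 7 := by
  norm_cast
  exact Real.mul_self_sqrt (by norm_num)

lemma s_sq' : s ^ 2 = 7 := by rw [pow_two]; exact s_sq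

lemma I_cube : Complex.I ^ 3 = -Complex.I := by
  rw [pow_succ, Complex.I_sq]; ring

lemma hPQ : Pm * Qm = 1 := by
  have h7 := s_sq
  ext i j
  fin_cases i <;> fin_cases j <;>
    simp [Pm, Qm, Matrix.mul_apply, Fin.sum_univ_three, Matrix.one_apply] <;>
    field_simp <;> ring_nf <;>
    simp [Complex.I_sq, pow_two, h7] <;> norm_num

lemma hQP : Qm * Pm = 1 := by
  have h7 := s_sq
  ext i j
  fin_cases i <;> fin_cases j <;>
    simp [Pm, Qm, Matrix.mul_apply, Fin.sum_univ_three, Matrix.one_apply] <;>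
    field_simp <;> ring_nf <;>
    simp [Complex.I_sq, pow_two, h7] <;> norm_num

def Um : (Matrix (Fin 3) (Fin 3) ℂ)ˣ := ⟨Pm, Qm, hPQ, hQP⟩

set_option maxHeartbeats 2000000 in
lemma key_decomp :
    (Real.pi * 1) • ((5 : ℝ) • X1 + (Real.sqrt 7 : ℝ) • Y1 + (5 : ℝ) • X2 +
        (Real.sqrt 7 : ℝ) • Y2 + (3 : ℝ) • R3) = Pm * Matrix.diagonal dvec * Qm := by
  have h7 := s_sq
  rw [diagonal_fin3]
  ext i j
  fin_cases i <;> fin_cases j <;>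
    simp [Pm, Qm, dvec, X1, Y1, X2, Y2, R3, Matrix.mul_apply,
      Fin.sum_univ_three, Complex.real_smul] <;>
    field_simp <;> ring_nf <;>
    simp [Complex.I_sq, I_cube, s_sq'] <;> ring_nf <;> norm_num

lemma exp_diag_one : NormedSpace.exp (Matrix.diagonal dvec) = 1 := by
  rw [Matrix.exp_diagonal]
  have h1 : NormedSpace.exp ((10 : ℂ) * π' * Complex.I) = 1 := by
    rw [← Complex.exp_eq_exp_ℂ]
    have := Complex.exp_int_mul_two_pi_mul_I 5
    convert this using 2
    push_cast; ring
  have h2 : NormedSpace.exp (-((10 : ℂ) * π' * Complex.I)) = 1 := by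
    rw [← Complex.exp_eq_exp_ℂ]
    have := Complex.exp_int_mul_two_pi_mul_I (-5)
    convert this using 2
    push_cast; ring
  rw [diagonal_fin3]
  ext i j
  fin_cases i <;> fin_cases j <;>
    simp [dvec, Matrix.one_apply, NormedSpace.exp_zero, h1, h2,
      Matrix.vecHead, Matrix.vecTail]

lemma exp_R3 : NormedSpace.exp (-((3 * Real.pi * 1) • R3)) = 1 := by
  have hd : -((3 * Real.pi * 1) • R3) =
      Matrix.diagonal ![6 * π' * Complex.I, 0, -(6 * π' * Complex.I)] := by
    ext i j
    fin_cases i <;> fin_cases j <;>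
      simp [R3, Matrix.diagonal, Complex.real_smul, Matrix.vecHead, Matrix.vecTail] <;>
      push_cast <;> ring_nf
  rw [hd, Matrix.exp_diagonal]
  have h1 : NormedSpace.exp ((6 : ℂ) * π' * Complex.I) = 1 := by
    rw [← Complex.exp_eq_exp_ℂ]
    have := Complex.exp_int_mul_two_pi_mul_I 3
    convert this using 2
    push_cast; ring
  have h2 : NormedSpace.exp (-((6 : ℂ) * π' * Complex.I)) = 1 := by
    rw [← Complex.exp_eq_exp_ℂ]
    have := Complex.exp_int_mul_two_pi_mul_I (-3)
    convert this using 2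
    push_cast; ring
  rw [diagonal_fin3]
  ext i j
  fin_cases i <;> fin_cases j <;>
    simp [Matrix.one_apply, NormedSpace.exp_zero, h1, h2,
      Matrix.vecHead, Matrix.vecTail]

/-- The curve `γ(t) = e^{π(5X₁+√7Y₁+5X₂+√7Y₂+3R₃)t} e^{-3πR₃t}` satisfies
`γ(0) = γ(1) = I`, and `H = π(5X₁+√7Y₁+5X₂+√7Y₂)` has norm `‖H‖ = 8π`
for `⟨X,Y⟩ = -½ tr(XY)`. -/
theorem su3_loop_example :
    (NormedSpace.exp ((Real.pi * 0) •
          ((5 : ℝ) • X1 + (Real.sqrt 7 : ℝ) • Y1 + (5 : ℝ) • X2 +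
            (Real.sqrt 7 : ℝ) • Y2 + (3 : ℝ) • R3)) *
        NormedSpace.exp (-((3 * Real.pi * 0) • R3)) = 1) ∧
    (NormedSpace.exp ((Real.pi * 1) •
          ((5 : ℝ) • X1 + (Real.sqrt 7 : ℝ) • Y1 + (5 : ℝ) • X2 +
            (Real.sqrt 7 : ℝ) • Y2 + (3 : ℝ) • R3)) *
        NormedSpace.exp (-((3 * Real.pi * 1) • R3)) = 1) ∧
    Real.sqrt ((-(1/2 : ℂ) *
        (((Real.pi • ((5 : ℝ) • X1 + (Real.sqrt 7 : ℝ) • Y1 + (5 : ℝ) • X2 +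
            (Real.sqrt 7 : ℝ) • Y2)) *
          (Real.pi • ((5 : ℝ) • X1 + (Real.sqrt 7 : ℝ) • Y1 + (5 : ℝ) • X2 +
            (Real.sqrt 7 : ℝ) • Y2))).trace)).re)
      = 8 * Real.pi := by
  refine ⟨?_, ?_, ?_⟩
  · rw [mul_zero, mul_zero, zero_smul, zero_smul, neg_zero, NormedSpace.exp_zero, mul_one]
  · rw [key_decomp, exp_R3, mul_one]
    have h : Pm * Matrix.diagonal dvec * Qm =
        (Um : Matrix (Fin 3) (Fin 3) ℂ) * Matrix.diagonal dvec *
          ((Um⁻¹ : (Matrix (Fin 3) (Fin 3) ℂ)ˣ) : Matrix (Fin 3) (Fin 3) ℂ) := rfl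
    rw [h, Matrix.exp_units_conj Um, exp_diag_one, mul_one]
    exact Um.mul_inv
  · have h7 := s_sq
    have htr : (-(1/2 : ℂ) *
        (((Real.pi • ((5 : ℝ) • X1 + (Real.sqrt 7 : ℝ) • Y1 + (5 : ℝ) • X2 +
            (Real.sqrt 7 : ℝ) • Y2)) *
          (Real.pi • ((5 : ℝ) • X1 + (Real.sqrt 7 : ℝ) • Y1 + (5 : ℝ) • X2 +
            (Real.sqrt 7 : ℝ) • Y2))).trace)) = ((64 * Real.pi ^ 2 : ℝ) : ℂ) := by
      simp [Matrix.trace, Matrix.diag, Matrix.mul_apply, Fin.sum_univ_three,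
        X1, Y1, X2, Y2, Complex.real_smul]
      ring_nf
      simp [Complex.I_sq, pow_two, h7]
      push_cast
      ring
    rw [htr]
    rw [Complex.ofReal_re]
    rw [show (64 : ℝ) * Real.pi ^ 2 = (8 * Real.pi) ^ 2 by ring]
    exact Real.sqrt_sq (by positivity)
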